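/- Let A be a k-quasihyponormal bounded operator on a complex Hilbert space (k a positive integer). Then for every real number a and all x, ⟨(A*²A² − aA*A + a²I)A^k x, A^k x⟩ ≥ 0. -/

import Mathlib

open ContinuousLinearMap
open scoped InnerProductSpace

variable {H : Type*} [NormedAddCommGroup H] [InnerProductSpace ℂ H] [CompleteSpace H]

/-- A k-quasihyponormal ⟹ ⟨(A*²A² − aA*A + a²I)A^k x, A^k x⟩ ≥ 0 for all real a. -/
theorem stmt18 (A : H →L[ℂ] H) (k : ℕ) (hk : 0 < k)
    (hA : ∀ x : H, ‖(adjoint A * A ^ k) x‖ ≤ ‖(A ^ (k + 1)) x‖) :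
    ∀ (a : ℝ) (x : H),
      0 ≤ RCLike.re (⟪((adjoint A) ^ 2 * A ^ 2 - (a : ℂ) • (adjoint A * A) +
          ((a : ℂ) ^ 2) • (1 : H →L[ℂ] H)) ((A ^ k) x), (A ^ k) x⟫_ℂ) := by
  intro a x
  set y := (A ^ k) x with hy
  have hcomm : A * A ^ k = A ^ k * A := (pow_succ' A k).symm.trans (pow_succ A k)
  have hc : A y = (A ^ k) (A x) := by
    have := DFunLike.congr_fun hcomm x
    simpa [mul_apply, hy] using this
  have hkey : ‖A y‖ ^ 2 ≤ ‖(A * A) y‖ * ‖y‖ := by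
    have h1 : ‖(adjoint A) (A y)‖ ≤ ‖(A * A) y‖ := by
      calc ‖(adjoint A) (A y)‖ = ‖(adjoint A * A ^ k) (A x)‖ := by rw [ContinuousLinearMap.mul_apply, ← hc]
        _ ≤ ‖(A ^ (k + 1)) (A x)‖ := hA (A x)
        _ = ‖A ((A ^ k) (A x))‖ := by rw [pow_succ']; rfl
        _ = ‖(A * A) y‖ := by rw [← hc]; rfl
    have h2 : ‖A y‖ ^ 2 ≤ ‖(adjoint A) (A y)‖ * ‖y‖ := by
      have hn := @norm_inner_le_norm ℂ _ _ _ _ ((adjoint A) (A y)) y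
      have heq : ⟪(adjoint A) (A y), y⟫_ℂ = ⟪A y, A y⟫_ℂ := adjoint_inner_left A y (A y)
      calc ‖A y‖ ^ 2 = ‖⟪A y, A y⟫_ℂ‖ := by
            rw [inner_self_eq_norm_sq_to_K]; push_cast; simp [sq_abs]
        _ = ‖⟪(adjoint A) (A y), y⟫_ℂ‖ := by rw [heq]
        _ ≤ _ := hn
    calc ‖A y‖ ^ 2 ≤ ‖(adjoint A) (A y)‖ * ‖y‖ := h2
      _ ≤ ‖(A * A) y‖ * ‖y‖ := mul_le_mul_of_nonneg_right h1 (norm_nonneg _)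
  have hexp : RCLike.re (⟪((adjoint A) ^ 2 * A ^ 2 - (a : ℂ) • (adjoint A * A) +
      ((a : ℂ) ^ 2) • (1 : H →L[ℂ] H)) y, y⟫_ℂ)
      = ‖(A * A) y‖ ^ 2 - a * ‖A y‖ ^ 2 + a ^ 2 * ‖y‖ ^ 2 := by
    simp only [add_apply, sub_apply, smul_apply, ContinuousLinearMap.mul_apply, ContinuousLinearMap.one_apply, pow_succ, pow_zero,
      one_mul]
    rw [inner_add_left, inner_sub_left, inner_smul_left, inner_smul_left]
    have e1 : ⟪(adjoint A) ((adjoint A) (A (A y))), y⟫_ℂ = ⟪A (A y), A (A y)⟫_ℂ := by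
      rw [adjoint_inner_left, adjoint_inner_left]
    have e2 : ⟪(adjoint A) (A y), y⟫_ℂ = ⟪A y, A y⟫_ℂ := adjoint_inner_left A y (A y)
    rw [e1, e2, inner_self_eq_norm_sq_to_K, inner_self_eq_norm_sq_to_K,
      inner_self_eq_norm_sq_to_K]
    simp [Complex.ext_iff, ← Complex.ofReal_pow]
    ring
  rw [hexp]
  nlinarith [sq_nonneg (‖(A*A) y‖ - |a| * ‖y‖), abs_nonneg a, le_abs_self a,
    neg_abs_le a, sq_nonneg (‖A y‖), norm_nonneg y, norm_nonneg ((A*A) y),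
    mul_le_mul_of_nonneg_left hkey (abs_nonneg a), sq_abs a]
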